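/- arXiv:2011.13868 — 3 statements merged into one kernel-verified Lean document; each statement's English description precedes it below -/
import Mathlib

section
/- Let the T recorded columns of (U_L, Y_L) each be a trajectory of the LTI system, with the j-th column of X_1 being the initial state of the j-th trajectory. Assume the stacked matrix [X_1; U_L] ∈ ℝ^{(n+Lm)×T} has full row rank n + Lm (so in particular U_L is persistently exciting of order L and rank(X_1) = n, which requires T ≥ Lm + n). Then for any input sequence u = (u_1,…,u_L) in ℝ^m and output sequence y = (y_1,…,y_L) in ℝ^p, the pair (u, y) is a trajectory of the system if and only if there exists g ∈ ℝ^T such that U_L g equals the stacked vector [u_1; …; u_L] and Y_L g equals the stacked vector [y_1; …; y_L]. -/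
open Matrix

/-- `(u, y)` is a trajectory of the discrete-time LTI system `(A, B, C, D)` of length `L`,
started from the initial state `x₁`. -/
def IsTrajectoryFrom {n m p : ℕ} (A : Matrix (Fin n) (Fin n) ℝ) (B : Matrix (Fin n) (Fin m) ℝ)
    (C : Matrix (Fin p) (Fin n) ℝ) (D : Matrix (Fin p) (Fin m) ℝ) (L : ℕ)
    (x₁ : Fin n → ℝ) (u : Fin L → Fin m → ℝ) (y : Fin L → Fin p → ℝ) : Prop :=
  ∃ x : Fin L → Fin n → ℝ,
    (∀ h : 0 < L, x ⟨0, h⟩ = x₁) ∧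
    (∀ k : ℕ, ∀ h : k + 1 < L,
      x ⟨k + 1, h⟩ =
        A.mulVec (x ⟨k, Nat.lt_of_succ_lt h⟩) + B.mulVec (u ⟨k, Nat.lt_of_succ_lt h⟩)) ∧
    (∀ k : Fin L, y k = C.mulVec (x k) + D.mulVec (u k))

/-- `(u, y)` is a trajectory of the discrete-time LTI system `(A, B, C, D)` of length `L`. -/
def IsTrajectory {n m p : ℕ} (A : Matrix (Fin n) (Fin n) ℝ) (B : Matrix (Fin n) (Fin m) ℝ)
    (C : Matrix (Fin p) (Fin n) ℝ) (D : Matrix (Fin p) (Fin m) ℝ) (L : ℕ)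
    (u : Fin L → Fin m → ℝ) (y : Fin L → Fin p → ℝ) : Prop :=
  ∃ x₁ : Fin n → ℝ, IsTrajectoryFrom A B C D L x₁ u y


lemma mulVec_sum_smul {α β : Type*} [Fintype α] [Fintype β] {ι : Type*} (s : Finset ι)
    (A : Matrix α β ℝ) (g : ι → ℝ) (v : ι → β → ℝ) :
    A.mulVec (∑ j ∈ s, g j • v j) = ∑ j ∈ s, g j • A.mulVec (v j) := by
  simp [← Matrix.mulVecLin_apply, map_sum, _root_.map_smul, -Matrix.mulVecBilin_apply]

lemma col_eq_sum {α : Type*} [Fintype α] {T : ℕ} (M : Matrix α (Fin T) ℝ) (g : Fin T → ℝ) :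
    M.mulVec g = ∑ j, g j • (fun i => M i j) := by
  funext i
  simp [Matrix.mulVec, dotProduct, mul_comm]

lemma traj_lincomb {n m p T L : ℕ} {A : Matrix (Fin n) (Fin n) ℝ} {B : Matrix (Fin n) (Fin m) ℝ}
    {C : Matrix (Fin p) (Fin n) ℝ} {D : Matrix (Fin p) (Fin m) ℝ}
    {UL : Matrix (Fin L × Fin m) (Fin T) ℝ} {YL : Matrix (Fin L × Fin p) (Fin T) ℝ}
    {X1 : Matrix (Fin n) (Fin T) ℝ}
    (hdata : ∀ j : Fin T, IsTrajectoryFrom A B C D L (fun i => X1 i j)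
      (fun k i => UL (k, i) j) (fun k i => YL (k, i) j)) (g : Fin T → ℝ) :
    IsTrajectoryFrom A B C D L (X1.mulVec g)
      (fun k i => UL.mulVec g (k, i)) (fun k i => YL.mulVec g (k, i)) := by
  choose xs h1 h2 h3 using hdata
  have hu : ∀ k : Fin L, (fun i => UL.mulVec g (k, i)) = ∑ j, g j • (fun i => UL (k, i) j) := by
    intro k; funext i
    simp [Matrix.mulVec, dotProduct, mul_comm]
  refine ⟨fun k => ∑ j, g j • xs j k, ?_, ?_, ?_⟩
  · intro h
    rw [col_eq_sum]
    exact Finset.sum_congr rfl fun j _ => by rw [h1 j h]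
  · intro k h
    have : ∀ j : Fin T, xs j ⟨k + 1, h⟩ =
        A.mulVec (xs j ⟨k, Nat.lt_of_succ_lt h⟩) +
          B.mulVec (fun i => UL (⟨k, Nat.lt_of_succ_lt h⟩, i) j) := fun j => h2 j k h
    calc (∑ j, g j • xs j ⟨k + 1, h⟩)
        = ∑ j, (g j • A.mulVec (xs j ⟨k, Nat.lt_of_succ_lt h⟩)
            + g j • B.mulVec (fun i => UL (⟨k, Nat.lt_of_succ_lt h⟩, i) j)) := by
          refine Finset.sum_congr rfl fun j _ => ?_
          rw [this j, smul_add]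
      _ = A.mulVec (∑ j, g j • xs j ⟨k, Nat.lt_of_succ_lt h⟩)
            + B.mulVec (fun i => UL.mulVec g (⟨k, Nat.lt_of_succ_lt h⟩, i)) := by
          rw [Finset.sum_add_distrib, mulVec_sum_smul, hu, mulVec_sum_smul]
  · intro k
    have : ∀ j : Fin T, (fun i => YL (k, i) j) =
        C.mulVec (xs j k) + D.mulVec (fun i => UL (k, i) j) := fun j => h3 j k
    calc (fun i => YL.mulVec g (k, i))
        = ∑ j, g j • (fun i => YL (k, i) j) := by
          funext i; simp [Matrix.mulVec, dotProduct, mul_comm]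
      _ = ∑ j, (g j • C.mulVec (xs j k) + g j • D.mulVec (fun i => UL (k, i) j)) := by
          refine Finset.sum_congr rfl fun j _ => ?_
          rw [this j, smul_add]
      _ = C.mulVec (∑ j, g j • xs j k) + D.mulVec (fun i => UL.mulVec g (k, i)) := by
          rw [Finset.sum_add_distrib, mulVec_sum_smul, hu, mulVec_sum_smul]

lemma traj_unique {n m p L : ℕ} {A : Matrix (Fin n) (Fin n) ℝ} {B : Matrix (Fin n) (Fin m) ℝ}
    {C : Matrix (Fin p) (Fin n) ℝ} {D : Matrix (Fin p) (Fin m) ℝ}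
    {x₁ : Fin n → ℝ} {u : Fin L → Fin m → ℝ} {y y' : Fin L → Fin p → ℝ}
    (h : IsTrajectoryFrom A B C D L x₁ u y) (h' : IsTrajectoryFrom A B C D L x₁ u y') :
    y = y' := by
  obtain ⟨x, hx1, hx2, hx3⟩ := h
  obtain ⟨x', hx1', hx2', hx3'⟩ := h'
  have key : ∀ k : ℕ, ∀ hk : k < L, x ⟨k, hk⟩ = x' ⟨k, hk⟩ := by
    intro k
    induction k with
    | zero => intro hk; rw [hx1 hk, hx1' hk]
    | succ k ih =>
      intro hk
      rw [hx2 k hk, hx2' k hk, ih (Nat.lt_of_succ_lt hk)]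
  funext k
  rw [hx3 k, hx3' k, key k.1 k.2]

/-- **Fundamental lemma.** If the `T` recorded columns of `(U_L, Y_L)` are trajectories of the
system with initial states the columns of `X₁`, and the stacked matrix `[X₁; U_L]` has full row
rank `n + L·m`, then `(u, y)` is a trajectory of the system iff there is `g` with
`U_L g = u` and `Y_L g = y` (stacked). -/
theorem fundamental_lemma {n m p T_ini N T : ℕ} {L : ℕ} (hL : L = T_ini + N)
    (A : Matrix (Fin n) (Fin n) ℝ) (B : Matrix (Fin n) (Fin m) ℝ)
    (C : Matrix (Fin p) (Fin n) ℝ) (D : Matrix (Fin p) (Fin m) ℝ)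
    (UL : Matrix (Fin L × Fin m) (Fin T) ℝ) (YL : Matrix (Fin L × Fin p) (Fin T) ℝ)
    (X1 : Matrix (Fin n) (Fin T) ℝ)
    (hdata : ∀ j : Fin T, IsTrajectoryFrom A B C D L (fun i => X1 i j)
      (fun k i => UL (k, i) j) (fun k i => YL (k, i) j))
    (hrank : (Matrix.fromRows X1 UL).rank = n + L * m)
    (u : Fin L → Fin m → ℝ) (y : Fin L → Fin p → ℝ) :
    IsTrajectory A B C D L u y ↔
      ∃ g : Fin T → ℝ,
        UL.mulVec g = (fun ki => u ki.1 ki.2) ∧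
        YL.mulVec g = (fun ki => y ki.1 ki.2) := by
  constructor
  · rintro ⟨x₁, htraj⟩
    have hsurj : Function.Surjective (Matrix.fromRows X1 UL).mulVec := by
      have htop : LinearMap.range (Matrix.fromRows X1 UL).mulVecLin = ⊤ := by
        apply Submodule.eq_top_of_finrank_eq
        rw [show Module.finrank ℝ ↥(LinearMap.range (Matrix.fromRows X1 UL).mulVecLin)
          = (Matrix.fromRows X1 UL).rank from rfl, hrank,
          Module.finrank_fintype_fun_eq_card]
        simp [Fintype.card_sum, Fintype.card_prod]
      intro w
      obtain ⟨g, hg⟩ := LinearMap.range_eq_top.mp htop w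
      exact ⟨g, hg⟩
    obtain ⟨g, hg⟩ := hsurj (Sum.elim x₁ (fun ki => u ki.1 ki.2))
    rw [Matrix.fromRows_mulVec] at hg
    have hX : X1.mulVec g = x₁ := funext fun i => congrFun hg (Sum.inl i)
    have hU : UL.mulVec g = (fun ki => u ki.1 ki.2) :=
      funext fun ki => congrFun hg (Sum.inr ki)
    have hcomb := traj_lincomb hdata g
    rw [hX] at hcomb
    have hUeq : (fun (k : Fin L) i => UL.mulVec g (k, i)) = u := by
      funext k i; rw [hU]
    rw [hUeq] at hcomb
    refine ⟨g, hU, ?_⟩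
    have := traj_unique htraj hcomb
    funext ki
    rw [← congrFun (congrFun this ki.1) ki.2]
  · rintro ⟨g, hU, hY⟩
    have hcomb := traj_lincomb hdata g
    have hUeq : (fun (k : Fin L) i => UL.mulVec g (k, i)) = u := by
      funext k i; rw [hU]
    have hYeq : (fun (k : Fin L) i => YL.mulVec g (k, i)) = y := by
      funext k i; rw [hY]
    rw [hUeq, hYeq] at hcomb
    exact ⟨_, hcomb⟩
end

section
/- Let M ∈ ℝ^{q×q} be invertible, let Y ∈ ℝ^{s×q}, let Q ∈ ℝ^{s×s} and V ∈ ℝ^{q×q} be symmetric positive definite, let b ∈ ℝ^q, and set P = Y M⁻¹. Then the matrices V + Pᵀ Q P and Mᵀ V M + Yᵀ Q Y are invertible and the following identity holds: −(V + Pᵀ Q P)⁻¹ Pᵀ Q P b = M (Mᵀ V M + Yᵀ Q Y)⁻¹ Mᵀ V b − b. (That is, the explicit SPC solution coincides with the explicit DeePC solution with regularization weight λ_g = 0.) -/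
open Matrix

/-- **Theorem 2 (matrix identity behind the non-deterministic equivalence).** For invertible
`M`, `P = Y M⁻¹`, and symmetric positive definite `Q`, `V`, the matrices `V + PᵀQP` and
`MᵀVM + YᵀQY` are invertible and
`−(V + PᵀQP)⁻¹ PᵀQP b = M (MᵀVM + YᵀQY)⁻¹ MᵀV b − b`. -/
theorem spc_deepc_explicit_solutions_coincide {q s : ℕ}
    (M : Matrix (Fin q) (Fin q) ℝ) (hM : IsUnit M.det)
    (Y : Matrix (Fin s) (Fin q) ℝ)
    (Q : Matrix (Fin s) (Fin s) ℝ) (V : Matrix (Fin q) (Fin q) ℝ)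
    (hQ : Q.PosDef) (hV : V.PosDef) (b : Fin q → ℝ)
    (P : Matrix (Fin s) (Fin q) ℝ) (hP : P = Y * M⁻¹) :
    IsUnit (V + Pᵀ * Q * P).det ∧
    IsUnit (Mᵀ * V * M + Yᵀ * Q * Y).det ∧
    -(V + Pᵀ * Q * P)⁻¹.mulVec ((Pᵀ * Q * P).mulVec b) =
      M.mulVec ((Mᵀ * V * M + Yᵀ * Q * Y)⁻¹.mulVec (Mᵀ.mulVec (V.mulVec b))) - b := by
  have hPM : P * M = Y := by
    rw [hP, Matrix.mul_assoc, Matrix.nonsing_inv_mul M hM, Matrix.mul_one]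
  set A := V + Pᵀ * Q * P with hAdef
  have hPQP : (Pᵀ * Q * P).PosSemidef := by
    have := hQ.posSemidef.conjTranspose_mul_mul_same P
    simpa [Matrix.conjTranspose_eq_transpose_of_trivial] using this
  have hA : A.PosDef := hV.add_posSemidef hPQP
  have hAudet : IsUnit A.det := hA.det_pos.ne'.isUnit
  have hEq : Mᵀ * V * M + Yᵀ * Q * Y = Mᵀ * A * M := by
    rw [hAdef, ← hPM]
    simp [Matrix.transpose_mul, Matrix.add_mul, Matrix.mul_add, Matrix.mul_assoc]
  have hMT : IsUnit Mᵀ.det := by rwa [Matrix.det_transpose]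
  have hBudet : IsUnit (Mᵀ * V * M + Yᵀ * Q * Y).det := by
    rw [hEq]
    simp only [Matrix.det_mul]
    exact (hMT.mul hAudet).mul hM
  refine ⟨hAudet, hBudet, ?_⟩
  have hinv : (Mᵀ * V * M + Yᵀ * Q * Y)⁻¹ = M⁻¹ * A⁻¹ * Mᵀ⁻¹ := by
    rw [hEq, Matrix.mul_inv_rev, Matrix.mul_inv_rev]
    noncomm_ring
  rw [hinv]
  -- reduce to matrix identity applied to b
  have key : -((A⁻¹ * (Pᵀ * Q * P))) = M * (M⁻¹ * A⁻¹ * Mᵀ⁻¹) * Mᵀ * V - 1 := by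
    have h1 : M * (M⁻¹ * A⁻¹ * Mᵀ⁻¹) * Mᵀ * V = A⁻¹ * V := by
      rw [show M * (M⁻¹ * A⁻¹ * Mᵀ⁻¹) * Mᵀ = M * M⁻¹ * A⁻¹ * (Mᵀ⁻¹ * Mᵀ) by noncomm_ring,
        Matrix.mul_nonsing_inv M hM, Matrix.nonsing_inv_mul Mᵀ hMT,
        Matrix.one_mul, Matrix.mul_one]
    rw [h1]
    have h2 : Pᵀ * Q * P = A - V := by rw [hAdef]; noncomm_ring
    rw [h2, Matrix.mul_sub, Matrix.nonsing_inv_mul A hAudet]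
    noncomm_ring
  calc -A⁻¹.mulVec ((Pᵀ * Q * P).mulVec b)
      = (-(A⁻¹ * (Pᵀ * Q * P))).mulVec b := by
        rw [Matrix.neg_mulVec, Matrix.mulVec_mulVec]
    _ = (M * (M⁻¹ * A⁻¹ * Mᵀ⁻¹) * Mᵀ * V - 1).mulVec b := by rw [key]
    _ = M.mulVec ((M⁻¹ * A⁻¹ * Mᵀ⁻¹).mulVec (Mᵀ.mulVec (V.mulVec b))) - b := by
        rw [Matrix.sub_mulVec, Matrix.one_mulVec]
        simp [Matrix.mulVec_mulVec, Matrix.mul_assoc]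
end

section
/- Let M ∈ ℝ^{q×q} be invertible, let Y ∈ ℝ^{s×q}, let Q ∈ ℝ^{s×s} and V ∈ ℝ^{q×q} be symmetric positive definite, let b ∈ ℝ^q, and set P = Y M⁻¹. Define F₀ : ℝ^q → ℝ by F₀(g) = (1/2)(Y g)ᵀ Q (Y g) + (1/2)(M g − b)ᵀ V (M g − b), and G : ℝ^q → ℝ by G(v) = (1/2)(P(b+v))ᵀ Q (P(b+v)) + (1/2) vᵀ V v. Then F₀ has a unique minimizer g* over ℝ^q, G has a unique minimizer v* over ℝ^q, and they are related by v* = M g* − b; i.e., the unconstrained DeePC problem with λ_g = 0 and the unconstrained SPC problem yield the same optimal slack/input vector. -/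
open Matrix

/-- The unconstrained DeePC objective with regularization weight `λ_g = 0`:
`F₀(g) = (1/2)(Y g)ᵀ Q (Y g) + (1/2)(M g − b)ᵀ V (M g − b)`. -/
noncomputable def deepcObj0 {q s : ℕ} (M : Matrix (Fin q) (Fin q) ℝ)
    (Y : Matrix (Fin s) (Fin q) ℝ) (Q : Matrix (Fin s) (Fin s) ℝ)
    (V : Matrix (Fin q) (Fin q) ℝ) (b : Fin q → ℝ) (g : Fin q → ℝ) : ℝ :=
  (1 / 2) * (Y.mulVec g ⬝ᵥ Q.mulVec (Y.mulVec g)) +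
    (1 / 2) * ((M.mulVec g - b) ⬝ᵥ V.mulVec (M.mulVec g - b))

/-- The unconstrained SPC objective `G(v) = (1/2)(P(b+v))ᵀ Q (P(b+v)) + (1/2) vᵀ V v`. -/
noncomputable def spcObj {q s : ℕ} (P : Matrix (Fin s) (Fin q) ℝ)
    (V : Matrix (Fin q) (Fin q) ℝ) (Q : Matrix (Fin s) (Fin s) ℝ)
    (b : Fin q → ℝ) (v : Fin q → ℝ) : ℝ :=
  (1 / 2) * (P.mulVec (b + v) ⬝ᵥ Q.mulVec (P.mulVec (b + v))) + (1 / 2) * (v ⬝ᵥ V.mulVec v)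

-- quadratic form lemma
lemma quad_form_eq (B : Matrix (Fin s) (Fin q) ℝ) (C : Matrix (Fin s) (Fin s) ℝ)
    (x : Fin q → ℝ) :
    (B.mulVec x) ⬝ᵥ C.mulVec (B.mulVec x) = x ⬝ᵥ (Bᵀ * C * B).mulVec x := by
  rw [← mulVec_mulVec, ← mulVec_mulVec, dotProduct_mulVec x, vecMul_transpose]

lemma herm_real {n : ℕ} {A : Matrix (Fin n) (Fin n) ℝ} (h : A.IsHermitian) : Aᵀ = A := by
  rw [← conjTranspose_eq_transpose_of_trivial]; exact h

lemma quad_min (A : Matrix (Fin q) (Fin q) ℝ) (hA : A.PosDef) (c : Fin q → ℝ) (k : ℝ)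
    (g : Fin q → ℝ) :
    (1/2 * (A⁻¹.mulVec c ⬝ᵥ A.mulVec (A⁻¹.mulVec c)) - c ⬝ᵥ A⁻¹.mulVec c + k)
      + 1/2 * ((g - A⁻¹.mulVec c) ⬝ᵥ A.mulVec (g - A⁻¹.mulVec c))
      = 1/2 * (g ⬝ᵥ A.mulVec g) - c ⬝ᵥ g + k := by
  have hgs : A.mulVec (A⁻¹.mulVec c) = c := by
    rw [mulVec_mulVec, mul_nonsing_inv _ (isUnit_iff_isUnit_det _ |>.1 hA.isUnit), one_mulVec]
  set gs := A⁻¹.mulVec c with hgsdef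
  have hsym : ∀ x y : Fin q → ℝ, x ⬝ᵥ A.mulVec y = y ⬝ᵥ A.mulVec x := by
    intro x y
    rw [dotProduct_mulVec]
    conv_lhs => rw [← herm_real hA.isHermitian]
    rw [vecMul_transpose, dotProduct_comm]
  have h1 : gs ⬝ᵥ A.mulVec g = c ⬝ᵥ g := by rw [hsym, hgs, dotProduct_comm]
  have h2 : g ⬝ᵥ A.mulVec gs = c ⬝ᵥ g := by rw [hgs, dotProduct_comm]
  have h3 : gs ⬝ᵥ A.mulVec gs = c ⬝ᵥ gs := by rw [hgs, dotProduct_comm]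
  rw [mulVec_sub, dotProduct_sub, sub_dotProduct, sub_dotProduct, h1, h2, h3]
  ring

lemma posdef_A (M : Matrix (Fin q) (Fin q) ℝ) (hM : IsUnit M.det)
    (Y : Matrix (Fin s) (Fin q) ℝ) (Q : Matrix (Fin s) (Fin s) ℝ)
    (V : Matrix (Fin q) (Fin q) ℝ) (hQ : Q.PosDef) (hV : V.PosDef) :
    (Yᵀ * Q * Y + Mᵀ * V * M).PosDef := by
  refine PosDef.of_dotProduct_mulVec_pos ?_ ?_
  · have hasym : (Yᵀ * Q * Y + Mᵀ * V * M)ᵀ = Yᵀ * Q * Y + Mᵀ * V * M := by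
      rw [transpose_add, transpose_mul, transpose_mul, transpose_mul, transpose_mul,
        transpose_transpose, transpose_transpose, herm_real hQ.isHermitian,
        herm_real hV.isHermitian, Matrix.mul_assoc, Matrix.mul_assoc]
    rw [IsHermitian, conjTranspose_eq_transpose_of_trivial, hasym]
  · intro x hx
    have hstar : star x = x := rfl
    rw [hstar, add_mulVec, dotProduct_add, ← quad_form_eq Y Q x, ← quad_form_eq M V x]
    have h1 : 0 ≤ (Y.mulVec x) ⬝ᵥ Q.mulVec (Y.mulVec x) := by
      have := hQ.posSemidef.dotProduct_mulVec_nonneg (Y.mulVec x)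
      simpa using this
    have h2 : 0 < (M.mulVec x) ⬝ᵥ V.mulVec (M.mulVec x) := by
      have hMx : M.mulVec x ≠ 0 := by
        intro h
        exact hx (by
          have := Matrix.mulVec_injective_iff_isUnit.mpr (isUnit_iff_isUnit_det _ |>.2 hM)
          exact this (by simpa using h))
      have := hV.dotProduct_mulVec_pos hMx
      simpa using this
    linarith

lemma deepc_expand (M : Matrix (Fin q) (Fin q) ℝ)
    (Y : Matrix (Fin s) (Fin q) ℝ) (Q : Matrix (Fin s) (Fin s) ℝ)
    (V : Matrix (Fin q) (Fin q) ℝ) (hV : V.PosDef) (b : Fin q → ℝ) (g : Fin q → ℝ) :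
    deepcObj0 M Y Q V b g =
      1/2 * (g ⬝ᵥ (Yᵀ * Q * Y + Mᵀ * V * M).mulVec g)
        - (Mᵀ.mulVec (V.mulVec b)) ⬝ᵥ g + 1/2 * (b ⬝ᵥ V.mulVec b) := by
  unfold deepcObj0
  rw [add_mulVec, dotProduct_add, ← quad_form_eq Y Q g, ← quad_form_eq M V g]
  have hVsym : ∀ x y : Fin q → ℝ, x ⬝ᵥ V.mulVec y = y ⬝ᵥ V.mulVec x := by
    intro x y
    rw [dotProduct_mulVec]
    conv_lhs => rw [← herm_real hV.isHermitian]
    rw [vecMul_transpose, dotProduct_comm]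
  have hc : (Mᵀ.mulVec (V.mulVec b)) ⬝ᵥ g = b ⬝ᵥ V.mulVec (M.mulVec g) := by
    rw [mulVec_transpose, ← dotProduct_mulVec, dotProduct_comm, hVsym]
  rw [mulVec_sub, dotProduct_sub, sub_dotProduct, sub_dotProduct,
    hVsym b (M.mulVec g)] at *
  rw [hc]
  ring


/-- **Theorem 2 (equivalence of unconstrained DeePC with `λ_g = 0` and SPC).** For invertible
`M` and `P = Y M⁻¹`, the objectives `F₀` and `G` have unique minimizers `g*` and `v*`
respectively, and they are related by `v* = M g* − b`. -/
theorem deepc_spc_nondeterministic_equivalence {q s : ℕ}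
    (M : Matrix (Fin q) (Fin q) ℝ) (hM : IsUnit M.det)
    (Y : Matrix (Fin s) (Fin q) ℝ)
    (Q : Matrix (Fin s) (Fin s) ℝ) (V : Matrix (Fin q) (Fin q) ℝ)
    (hQ : Q.PosDef) (hV : V.PosDef) (b : Fin q → ℝ)
    (P : Matrix (Fin s) (Fin q) ℝ) (hP : P = Y * M⁻¹) :
    ∃ (gs vs : Fin q → ℝ),
      (∀ g : Fin q → ℝ, deepcObj0 M Y Q V b gs ≤ deepcObj0 M Y Q V b g) ∧
      (∀ g : Fin q → ℝ, (∀ g' : Fin q → ℝ, deepcObj0 M Y Q V b g ≤ deepcObj0 M Y Q V b g') →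
        g = gs) ∧
      (∀ v : Fin q → ℝ, spcObj P V Q b vs ≤ spcObj P V Q b v) ∧
      (∀ v : Fin q → ℝ, (∀ v' : Fin q → ℝ, spcObj P V Q b v ≤ spcObj P V Q b v') → v = vs) ∧
      vs = M.mulVec gs - b := by
  have hA := posdef_A M hM Y Q V hQ hV
  set A := Yᵀ * Q * Y + Mᵀ * V * M with hAdef
  set c := Mᵀ.mulVec (V.mulVec b) with hcdef
  set gs := A⁻¹.mulVec c with hgsdef
  have hexp := deepc_expand M Y Q V hV b
  have key : ∀ g, deepcObj0 M Y Q V b gs + 1/2 * ((g - gs) ⬝ᵥ A.mulVec (g - gs))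
      = deepcObj0 M Y Q V b g := by
    intro g
    rw [hexp, hexp]
    exact quad_min A hA c _ g
  have hquad_nonneg : ∀ d : Fin q → ℝ, 0 ≤ d ⬝ᵥ A.mulVec d := by
    intro d
    have := hA.posSemidef.dotProduct_mulVec_nonneg d
    simpa using this
  have hmin : ∀ g, deepcObj0 M Y Q V b gs ≤ deepcObj0 M Y Q V b g := by
    intro g
    have h := hquad_nonneg (g - gs)
    linarith [key g]
  have huniq : ∀ g, (∀ g', deepcObj0 M Y Q V b g ≤ deepcObj0 M Y Q V b g') → g = gs := by
    intro g hg
    have heq : deepcObj0 M Y Q V b gs = deepcObj0 M Y Q V b g :=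
      le_antisymm (hmin g) (hg gs)
    have hz : (g - gs) ⬝ᵥ A.mulVec (g - gs) = 0 := by linarith [key g]
    by_contra hne
    have hpos := hA.dotProduct_mulVec_pos (x := g - gs) (sub_ne_zero.2 hne)
    rw [show star (g - gs) = g - gs from rfl] at hpos
    exact absurd hz (ne_of_gt hpos)
  -- spc relation
  have hMinv : IsUnit M := isUnit_iff_isUnit_det _ |>.2 hM
  have hMM : M * M⁻¹ = 1 := mul_nonsing_inv _ hM
  have hMM' : M⁻¹ * M = 1 := nonsing_inv_mul _ hM
  have hrel : ∀ v, spcObj P V Q b v = deepcObj0 M Y Q V b (M⁻¹.mulVec (b + v)) := by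
    intro v
    have h1 : M.mulVec (M⁻¹.mulVec (b + v)) = b + v := by
      rw [mulVec_mulVec, hMM, one_mulVec]
    have h2 : Y.mulVec (M⁻¹.mulVec (b + v)) = P.mulVec (b + v) := by
      rw [mulVec_mulVec, hP]
    unfold spcObj deepcObj0
    rw [h1, h2, add_sub_cancel_left]
  set vs := M.mulVec gs - b with hvsdef
  have hvs : M⁻¹.mulVec (b + vs) = gs := by
    rw [hvsdef, add_sub_cancel, mulVec_mulVec, hMM', one_mulVec]
  refine ⟨gs, vs, hmin, huniq, ?_, ?_, rfl⟩
  · intro v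
    rw [hrel, hrel, hvs]
    exact hmin _
  · intro v hv
    have hrel2 : ∀ g', deepcObj0 M Y Q V b g' = spcObj P V Q b (M.mulVec g' - b) := by
      intro g'
      rw [hrel, add_sub_cancel, mulVec_mulVec, hMM', one_mulVec]
    have hgmin : M⁻¹.mulVec (b + v) = gs := by
      apply huniq
      intro g'
      rw [← hrel, hrel2 g']
      exact hv _
    have : M.mulVec (M⁻¹.mulVec (b + v)) = b + v := by
      rw [mulVec_mulVec, hMM, one_mulVec]
    rw [hgmin] at this
    rw [hvsdef, this, add_sub_cancel_left]
end
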